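/- (Convexity in subsidy.) For each fixed belief π ∈ [0,1], each y ∈ {0,1}, and each feasible action a (a ∈ {0,1} if y = 1, a = 0 if y = 0), the functions w ↦ V_w(π, y) and w ↦ L^a_wV_w(π, y) are convex on ℝ, where V_w is the unique bounded fixed point of the Bellman operator T_w with subsidy w. -/
import Mathlib


open Set

noncomputable section

/-- Expected immediate reward (success probability) at belief `π`. -/
def rhoB (ρ0 ρ1 π : ℝ) : ℝ := π * ρ0 + (1 - π) * ρ1

/-- Belief update after a play resulting in success. -/
def Gam1 (p00 p10 ρ0 ρ1 π : ℝ) : ℝ :=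
  (π * ρ0 * p00 + (1 - π) * ρ1 * p10) / (π * ρ0 + (1 - π) * ρ1)

/-- Belief update after a play resulting in failure. -/
def Gam0 (p00 p10 ρ0 ρ1 π : ℝ) : ℝ :=
  (π * (1 - ρ0) * p00 + (1 - π) * (1 - ρ1) * p10) /
    (π * (1 - ρ0) + (1 - π) * (1 - ρ1))

/-- Belief update without observation (natural Markov evolution). -/
def gam (p00 p10 π : ℝ) : ℝ := π * p00 + (1 - π) * p10

/-- Action value of playing an available arm. -/
def Lact1 (p00 p10 ρ0 ρ1 β θ11 : ℝ) (V : ℝ → Bool → ℝ) (π : ℝ) : ℝ :=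
  rhoB ρ0 ρ1 π
    + β * rhoB ρ0 ρ1 π *
        (θ11 * V (Gam1 p00 p10 ρ0 ρ1 π) true +
          (1 - θ11) * V (Gam1 p00 p10 ρ0 ρ1 π) false)
    + β * (1 - rhoB ρ0 ρ1 π) *
        (θ11 * V (Gam0 p00 p10 ρ0 ρ1 π) true +
          (1 - θ11) * V (Gam0 p00 p10 ρ0 ρ1 π) false)

/-- Action value of not playing an available arm (subsidy `w`). -/
def Lact0a (p00 p10 β w θ01 : ℝ) (V : ℝ → Bool → ℝ) (π : ℝ) : ℝ :=
  w + β * (θ01 * V (gam p00 p10 π) true + (1 - θ01) * V (gam p00 p10 π) false)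

/-- Action value for an unavailable arm (subsidy `w`). -/
def Lact0u (p00 p10 β w θ00 : ℝ) (V : ℝ → Bool → ℝ) (π : ℝ) : ℝ :=
  w + β * (θ00 * V (gam p00 p10 π) true + (1 - θ00) * V (gam p00 p10 π) false)

/-- Bellman operator of the constrained restless single-armed bandit with
stochastic availability; availability `y` is encoded by `Bool`. -/
def TwOp (p00 p10 ρ0 ρ1 β w θ11 θ01 θ00 : ℝ) (V : ℝ → Bool → ℝ) : ℝ → Bool → ℝ :=
  fun π y =>
    if y then max (Lact1 p00 p10 ρ0 ρ1 β θ11 V π) (Lact0a p00 p10 β w θ01 V π)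
    else Lact0u p00 p10 β w θ00 V π

/-- Bounded on the belief space `[0,1] × {0,1}`. -/
def BddOnIcc (V : ℝ → Bool → ℝ) : Prop :=
  ∃ C : ℝ, ∀ π ∈ Icc (0:ℝ) 1, ∀ y : Bool, |V π y| ≤ C

/-- Fixed point of an operator on the belief space `[0,1] × {0,1}`. -/
def FixedOnIcc (T : (ℝ → Bool → ℝ) → ℝ → Bool → ℝ) (V : ℝ → Bool → ℝ) : Prop :=
  ∀ π ∈ Icc (0:ℝ) 1, ∀ y : Bool, T V π y = V π y

/-! ### Auxiliary lemmas -/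

lemma gam_mem {p00 p10 : ℝ} (hp00 : p00 ∈ Icc (0:ℝ) 1) (hp10 : p10 ∈ Icc (0:ℝ) 1)
    {π : ℝ} (hπ : π ∈ Icc (0:ℝ) 1) : gam p00 p10 π ∈ Icc (0:ℝ) 1 := by
  obtain ⟨h1, h2⟩ := hp00; obtain ⟨h3, h4⟩ := hp10; obtain ⟨h5, h6⟩ := hπ
  constructor <;> simp only [gam] <;> nlinarith

lemma rhoB_mem {ρ0 ρ1 : ℝ} (hρ0 : 0 < ρ0) (hρ01 : ρ0 < ρ1) (hρ1 : ρ1 < 1)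
    {π : ℝ} (hπ : π ∈ Icc (0:ℝ) 1) : rhoB ρ0 ρ1 π ∈ Icc (0:ℝ) 1 := by
  obtain ⟨h5, h6⟩ := hπ
  constructor <;> simp only [rhoB] <;> nlinarith

lemma Gam1_mem {p00 p10 ρ0 ρ1 : ℝ} (hp00 : p00 ∈ Icc (0:ℝ) 1) (hp10 : p10 ∈ Icc (0:ℝ) 1)
    (hρ0 : 0 < ρ0) (hρ01 : ρ0 < ρ1) (hρ1 : ρ1 < 1)
    {π : ℝ} (hπ : π ∈ Icc (0:ℝ) 1) : Gam1 p00 p10 ρ0 ρ1 π ∈ Icc (0:ℝ) 1 := by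
  obtain ⟨h1, h2⟩ := hp00; obtain ⟨h3, h4⟩ := hp10; obtain ⟨h5, h6⟩ := hπ
  have hD : 0 < π * ρ0 + (1 - π) * ρ1 := by nlinarith
  have t1 : 0 ≤ π * ρ0 * p00 := mul_nonneg (mul_nonneg h5 hρ0.le) h1
  have t2 : 0 ≤ (1 - π) * ρ1 * p10 :=
    mul_nonneg (mul_nonneg (by linarith) (by linarith)) h3
  have u1 : π * ρ0 * p00 ≤ π * ρ0 := mul_le_of_le_one_right (mul_nonneg h5 hρ0.le) h2
  have u2 : (1 - π) * ρ1 * p10 ≤ (1 - π) * ρ1 :=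
    mul_le_of_le_one_right (mul_nonneg (by linarith) (by linarith)) h4
  constructor
  · exact div_nonneg (by linarith) hD.le
  · rw [Gam1, div_le_one hD]; linarith

lemma Gam0_mem {p00 p10 ρ0 ρ1 : ℝ} (hp00 : p00 ∈ Icc (0:ℝ) 1) (hp10 : p10 ∈ Icc (0:ℝ) 1)
    (hρ0 : 0 < ρ0) (hρ01 : ρ0 < ρ1) (hρ1 : ρ1 < 1)
    {π : ℝ} (hπ : π ∈ Icc (0:ℝ) 1) : Gam0 p00 p10 ρ0 ρ1 π ∈ Icc (0:ℝ) 1 := by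
  obtain ⟨h1, h2⟩ := hp00; obtain ⟨h3, h4⟩ := hp10; obtain ⟨h5, h6⟩ := hπ
  have hD : 0 < π * (1 - ρ0) + (1 - π) * (1 - ρ1) := by nlinarith
  have t1 : 0 ≤ π * (1 - ρ0) * p00 := mul_nonneg (mul_nonneg h5 (by linarith)) h1
  have t2 : 0 ≤ (1 - π) * (1 - ρ1) * p10 :=
    mul_nonneg (mul_nonneg (by linarith) (by linarith)) h3
  have u1 : π * (1 - ρ0) * p00 ≤ π * (1 - ρ0) :=
    mul_le_of_le_one_right (mul_nonneg h5 (by linarith)) h2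
  have u2 : (1 - π) * (1 - ρ1) * p10 ≤ (1 - π) * (1 - ρ1) :=
    mul_le_of_le_one_right (mul_nonneg (by linarith) (by linarith)) h4
  constructor
  · exact div_nonneg (by linarith) hD.le
  · rw [Gam0, div_le_one hD]; linarith

/-- Monotonicity of `Lact1` in the value function. -/
lemma Lact1_mono {p00 p10 ρ0 ρ1 β θ11 : ℝ} (hβ : 0 ≤ β) (hθ : θ11 ∈ Icc (0:ℝ) 1)
    {π : ℝ} (hρπ : rhoB ρ0 ρ1 π ∈ Icc (0:ℝ) 1) {X Y : ℝ → Bool → ℝ}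
    (h1 : X (Gam1 p00 p10 ρ0 ρ1 π) true ≤ Y (Gam1 p00 p10 ρ0 ρ1 π) true)
    (h2 : X (Gam1 p00 p10 ρ0 ρ1 π) false ≤ Y (Gam1 p00 p10 ρ0 ρ1 π) false)
    (h3 : X (Gam0 p00 p10 ρ0 ρ1 π) true ≤ Y (Gam0 p00 p10 ρ0 ρ1 π) true)
    (h4 : X (Gam0 p00 p10 ρ0 ρ1 π) false ≤ Y (Gam0 p00 p10 ρ0 ρ1 π) false) :
    Lact1 p00 p10 ρ0 ρ1 β θ11 X π ≤ Lact1 p00 p10 ρ0 ρ1 β θ11 Y π := by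
  have c1 : θ11 * X (Gam1 p00 p10 ρ0 ρ1 π) true + (1 - θ11) * X (Gam1 p00 p10 ρ0 ρ1 π) false
      ≤ θ11 * Y (Gam1 p00 p10 ρ0 ρ1 π) true + (1 - θ11) * Y (Gam1 p00 p10 ρ0 ρ1 π) false :=
    add_le_add (mul_le_mul_of_nonneg_left h1 hθ.1)
      (mul_le_mul_of_nonneg_left h2 (by linarith [hθ.2]))
  have c2 : θ11 * X (Gam0 p00 p10 ρ0 ρ1 π) true + (1 - θ11) * X (Gam0 p00 p10 ρ0 ρ1 π) false
      ≤ θ11 * Y (Gam0 p00 p10 ρ0 ρ1 π) true + (1 - θ11) * Y (Gam0 p00 p10 ρ0 ρ1 π) false :=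
    add_le_add (mul_le_mul_of_nonneg_left h3 hθ.1)
      (mul_le_mul_of_nonneg_left h4 (by linarith [hθ.2]))
  have hρ2 : (0:ℝ) ≤ 1 - rhoB ρ0 ρ1 π := by linarith [hρπ.2]
  have d1 := mul_le_mul_of_nonneg_left c1 (mul_nonneg hβ hρπ.1)
  have d2 := mul_le_mul_of_nonneg_left c2 (mul_nonneg hβ hρ2)
  simp only [Lact1]; linarith

lemma Lact0a_mono {p00 p10 β w θ01 : ℝ} (hβ : 0 ≤ β) (hθ : θ01 ∈ Icc (0:ℝ) 1)
    {π : ℝ} {X Y : ℝ → Bool → ℝ}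
    (h1 : X (gam p00 p10 π) true ≤ Y (gam p00 p10 π) true)
    (h2 : X (gam p00 p10 π) false ≤ Y (gam p00 p10 π) false) :
    Lact0a p00 p10 β w θ01 X π ≤ Lact0a p00 p10 β w θ01 Y π := by
  have c1 : θ01 * X (gam p00 p10 π) true + (1 - θ01) * X (gam p00 p10 π) false
      ≤ θ01 * Y (gam p00 p10 π) true + (1 - θ01) * Y (gam p00 p10 π) false :=
    add_le_add (mul_le_mul_of_nonneg_left h1 hθ.1)
      (mul_le_mul_of_nonneg_left h2 (by linarith [hθ.2]))
  have := mul_le_mul_of_nonneg_left c1 hβ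
  simp only [Lact0a]; linarith

lemma Lact0u_mono {p00 p10 β w θ00 : ℝ} (hβ : 0 ≤ β) (hθ : θ00 ∈ Icc (0:ℝ) 1)
    {π : ℝ} {X Y : ℝ → Bool → ℝ}
    (h1 : X (gam p00 p10 π) true ≤ Y (gam p00 p10 π) true)
    (h2 : X (gam p00 p10 π) false ≤ Y (gam p00 p10 π) false) :
    Lact0u p00 p10 β w θ00 X π ≤ Lact0u p00 p10 β w θ00 Y π := by
  have c1 : θ00 * X (gam p00 p10 π) true + (1 - θ00) * X (gam p00 p10 π) false
      ≤ θ00 * Y (gam p00 p10 π) true + (1 - θ00) * Y (gam p00 p10 π) false :=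
    add_le_add (mul_le_mul_of_nonneg_left h1 hθ.1)
      (mul_le_mul_of_nonneg_left h2 (by linarith [hθ.2]))
  have := mul_le_mul_of_nonneg_left c1 hβ
  simp only [Lact0u]; linarith

/-- `Lact1` is linear in the value function for convex combinations. -/
lemma Lact1_linear {p00 p10 ρ0 ρ1 β θ11 : ℝ} {π : ℝ} (V1 V2 : ℝ → Bool → ℝ)
    {l m : ℝ} (hs : l + m = 1) :
    Lact1 p00 p10 ρ0 ρ1 β θ11 (fun π' y => l * V1 π' y + m * V2 π' y) π
      = l * Lact1 p00 p10 ρ0 ρ1 β θ11 V1 π + m * Lact1 p00 p10 ρ0 ρ1 β θ11 V2 π := by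
  have hm : m = 1 - l := by linarith
  subst hm
  simp only [Lact1]; ring

lemma Lact0a_linear {p00 p10 β θ01 : ℝ} {π : ℝ} (V1 V2 : ℝ → Bool → ℝ)
    {a b l m : ℝ} (hs : l + m = 1) :
    Lact0a p00 p10 β (l * a + m * b) θ01 (fun π' y => l * V1 π' y + m * V2 π' y) π
      = l * Lact0a p00 p10 β a θ01 V1 π + m * Lact0a p00 p10 β b θ01 V2 π := by
  have hm : m = 1 - l := by linarith
  subst hm
  simp only [Lact0a]; ring

lemma Lact0u_linear {p00 p10 β θ00 : ℝ} {π : ℝ} (V1 V2 : ℝ → Bool → ℝ)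
    {a b l m : ℝ} (hs : l + m = 1) :
    Lact0u p00 p10 β (l * a + m * b) θ00 (fun π' y => l * V1 π' y + m * V2 π' y) π
      = l * Lact0u p00 p10 β a θ00 V1 π + m * Lact0u p00 p10 β b θ00 V2 π := by
  have hm : m = 1 - l := by linarith
  subst hm
  simp only [Lact0u]; ring

/-- If `T_w U ≤ U` pointwise on the belief space, then the bounded fixed
point `W` of `T_w` satisfies `W ≤ U` there. -/
lemma dominate (p00 p10 ρ0 ρ1 β θ11 θ01 θ00 w : ℝ)
    (hp00 : p00 ∈ Icc (0:ℝ) 1) (hp10 : p10 ∈ Icc (0:ℝ) 1)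
    (hρ0 : 0 < ρ0) (hρ01 : ρ0 < ρ1) (hρ1 : ρ1 < 1)
    (hβ : β ∈ Ioo (0:ℝ) 1)
    (hθ11 : θ11 ∈ Icc (0:ℝ) 1) (hθ01 : θ01 ∈ Icc (0:ℝ) 1) (hθ00 : θ00 ∈ Icc (0:ℝ) 1)
    (W U : ℝ → Bool → ℝ) (hWb : BddOnIcc W) (hUb : BddOnIcc U)
    (hWfix : FixedOnIcc (TwOp p00 p10 ρ0 ρ1 β w θ11 θ01 θ00) W)
    (hU : ∀ π ∈ Icc (0:ℝ) 1, ∀ y : Bool,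
      TwOp p00 p10 ρ0 ρ1 β w θ11 θ01 θ00 U π y ≤ U π y) :
    ∀ π ∈ Icc (0:ℝ) 1, ∀ y : Bool, W π y ≤ U π y := by
  obtain ⟨C1, hC1⟩ := hWb
  obtain ⟨C2, hC2⟩ := hUb
  set S : Set ℝ := {d | ∃ π ∈ Icc (0:ℝ) 1, ∃ y : Bool, d = W π y - U π y} with hS
  have hne : S.Nonempty := ⟨W 0 true - U 0 true, 0, by norm_num, true, rfl⟩
  have hbdd : BddAbove S := by
    refine ⟨C1 + C2, ?_⟩
    rintro d ⟨π, hπ, y, rfl⟩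
    have h1 := abs_le.1 (hC1 π hπ y)
    have h2 := abs_le.1 (hC2 π hπ y)
    linarith [h1.2, h2.1]
  set M : ℝ := sSup S with hMdef
  have hM : ∀ π ∈ Icc (0:ℝ) 1, ∀ y : Bool, W π y - U π y ≤ M := fun π hπ y =>
    le_csSup hbdd ⟨π, hπ, y, rfl⟩
  set M' : ℝ := max M 0 with hM'def
  have hM'0 : 0 ≤ M' := le_max_right _ _
  have hMM' : M ≤ M' := le_max_left _ _
  have hM' : ∀ π ∈ Icc (0:ℝ) 1, ∀ y : Bool, W π y - U π y ≤ M' := fun π hπ y =>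
    le_trans (hM π hπ y) hMM'
  have hstep : ∀ π ∈ Icc (0:ℝ) 1, ∀ y : Bool, W π y - U π y ≤ β * M' := by
    intro π hπ y
    have hTU := hU π hπ y
    have hTW := hWfix π hπ y
    have hgoal : TwOp p00 p10 ρ0 ρ1 β w θ11 θ01 θ00 W π y
        - TwOp p00 p10 ρ0 ρ1 β w θ11 θ01 θ00 U π y ≤ β * M' := by
      cases y with
      | false =>
        simp only [TwOp, Bool.false_eq_true, if_false, Lact0u]
        have hg := gam_mem hp00 hp10 hπ
        have d1 := hM' _ hg true
        have d2 := hM' _ hg false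
        have key : θ00 * (W (gam p00 p10 π) true - U (gam p00 p10 π) true)
            + (1 - θ00) * (W (gam p00 p10 π) false - U (gam p00 p10 π) false) ≤ M' := by
          nlinarith [hθ00.1, hθ00.2]
        nlinarith [mul_le_mul_of_nonneg_left key hβ.1.le]
      | true =>
        simp only [TwOp, if_true]
        have hg := gam_mem hp00 hp10 hπ
        have hg1 := Gam1_mem hp00 hp10 hρ0 hρ01 hρ1 hπ
        have hg0 := Gam0_mem hp00 hp10 hρ0 hρ01 hρ1 hπ
        have hρπ := rhoB_mem hρ0 hρ01 hρ1 hπ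
        have hA : Lact1 p00 p10 ρ0 ρ1 β θ11 W π
            - Lact1 p00 p10 ρ0 ρ1 β θ11 U π ≤ β * M' := by
          have e1 := hM' _ hg1 true
          have e2 := hM' _ hg1 false
          have e3 := hM' _ hg0 true
          have e4 := hM' _ hg0 false
          have c1 : θ11 * (W (Gam1 p00 p10 ρ0 ρ1 π) true - U (Gam1 p00 p10 ρ0 ρ1 π) true)
              + (1 - θ11) * (W (Gam1 p00 p10 ρ0 ρ1 π) false - U (Gam1 p00 p10 ρ0 ρ1 π) false)
              ≤ M' := by nlinarith [hθ11.1, hθ11.2]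
          have c2 : θ11 * (W (Gam0 p00 p10 ρ0 ρ1 π) true - U (Gam0 p00 p10 ρ0 ρ1 π) true)
              + (1 - θ11) * (W (Gam0 p00 p10 ρ0 ρ1 π) false - U (Gam0 p00 p10 ρ0 ρ1 π) false)
              ≤ M' := by nlinarith [hθ11.1, hθ11.2]
          have f1 := mul_le_mul_of_nonneg_left c1 (mul_nonneg hβ.1.le hρπ.1)
          have f2 := mul_le_mul_of_nonneg_left c2
            (mul_nonneg hβ.1.le (by linarith [hρπ.2] : (0:ℝ) ≤ 1 - rhoB ρ0 ρ1 π))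
          simp only [Lact1]
          nlinarith [f1, f2]
        have hB : Lact0a p00 p10 β w θ01 W π
            - Lact0a p00 p10 β w θ01 U π ≤ β * M' := by
          have d1 := hM' _ hg true
          have d2 := hM' _ hg false
          have key : θ01 * (W (gam p00 p10 π) true - U (gam p00 p10 π) true)
              + (1 - θ01) * (W (gam p00 p10 π) false - U (gam p00 p10 π) false) ≤ M' := by
            nlinarith [hθ01.1, hθ01.2]
          simp only [Lact0a]
          nlinarith [mul_le_mul_of_nonneg_left key hβ.1.le]
        rw [sub_le_iff_le_add]
        refine max_le ?_ ?_
        · have := le_max_left (Lact1 p00 p10 ρ0 ρ1 β θ11 U π) (Lact0a p00 p10 β w θ01 U π)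
          linarith
        · have := le_max_right (Lact1 p00 p10 ρ0 ρ1 β θ11 U π) (Lact0a p00 p10 β w θ01 U π)
          linarith
    calc W π y - U π y ≤ TwOp p00 p10 ρ0 ρ1 β w θ11 θ01 θ00 W π y
          - TwOp p00 p10 ρ0 ρ1 β w θ11 θ01 θ00 U π y := by rw [hTW]; linarith
      _ ≤ β * M' := hgoal
  have hMle : M ≤ β * M' := by
    refine csSup_le hne ?_
    rintro d ⟨π, hπ, y, rfl⟩
    exact hstep π hπ y
  have hM0 : M ≤ 0 := by
    by_contra h
    push_neg at h
    have hMM : M' = M := max_eq_left h.le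
    rw [hMM] at hMle
    nlinarith [hβ.2]
  intro π hπ y
  linarith [hM π hπ y]


/-- Convexity inequality for the fixed-point family. -/
lemma combo (p00 p10 ρ0 ρ1 β θ11 θ01 θ00 : ℝ)
    (hp00 : p00 ∈ Icc (0:ℝ) 1) (hp10 : p10 ∈ Icc (0:ℝ) 1)
    (hρ0 : 0 < ρ0) (hρ01 : ρ0 < ρ1) (hρ1 : ρ1 < 1)
    (hβ : β ∈ Ioo (0:ℝ) 1)
    (hθ11 : θ11 ∈ Icc (0:ℝ) 1) (hθ01 : θ01 ∈ Icc (0:ℝ) 1) (hθ00 : θ00 ∈ Icc (0:ℝ) 1)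
    (V : ℝ → ℝ → Bool → ℝ)
    (hVb : ∀ w : ℝ, BddOnIcc (V w))
    (hVfix : ∀ w : ℝ, FixedOnIcc (TwOp p00 p10 ρ0 ρ1 β w θ11 θ01 θ00) (V w))
    (a b l m : ℝ) (hl : 0 ≤ l) (hm : 0 ≤ m) (hs : l + m = 1) :
    ∀ π ∈ Icc (0:ℝ) 1, ∀ y : Bool,
      V (l * a + m * b) π y ≤ l * V a π y + m * V b π y := by
  have hUb : BddOnIcc (fun π y => l * V a π y + m * V b π y) := by
    obtain ⟨Ca, hCa⟩ := hVb a
    obtain ⟨Cb, hCb⟩ := hVb b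
    refine ⟨l * Ca + m * Cb, fun π hπ y => ?_⟩
    have h1 := abs_add_le (l * V a π y) (m * V b π y)
    rw [abs_mul, abs_mul, abs_of_nonneg hl, abs_of_nonneg hm] at h1
    have h2 := mul_le_mul_of_nonneg_left (hCa π hπ y) hl
    have h3 := mul_le_mul_of_nonneg_left (hCb π hπ y) hm
    calc |l * V a π y + m * V b π y| ≤ l * |V a π y| + m * |V b π y| := h1
      _ ≤ l * Ca + m * Cb := by linarith
  have hU : ∀ π ∈ Icc (0:ℝ) 1, ∀ y : Bool,
      TwOp p00 p10 ρ0 ρ1 β (l * a + m * b) θ11 θ01 θ00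
        (fun π y => l * V a π y + m * V b π y) π y
      ≤ l * V a π y + m * V b π y := by
    intro π hπ y
    cases y with
    | false =>
      have ha := hVfix a π hπ false
      have hb := hVfix b π hπ false
      simp only [TwOp, Bool.false_eq_true, if_false] at ha hb ⊢
      rw [Lact0u_linear (V a) (V b) hs, ha, hb]
    | true =>
      have ha := hVfix a π hπ true
      have hb := hVfix b π hπ true
      simp only [TwOp, if_true] at ha hb ⊢
      rw [Lact1_linear (V a) (V b) hs, Lact0a_linear (V a) (V b) hs, ← ha, ← hb]
      refine max_le (add_le_add ?_ ?_) (add_le_add ?_ ?_)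
      · exact mul_le_mul_of_nonneg_left (le_max_left _ _) hl
      · exact mul_le_mul_of_nonneg_left (le_max_left _ _) hm
      · exact mul_le_mul_of_nonneg_left (le_max_right _ _) hl
      · exact mul_le_mul_of_nonneg_left (le_max_right _ _) hm
  exact dominate p00 p10 ρ0 ρ1 β θ11 θ01 θ00 (l * a + m * b) hp00 hp10 hρ0 hρ01 hρ1
    hβ hθ11 hθ01 hθ00 _ _ (hVb _) hUb (hVfix _) hU

/-- **Convexity in subsidy.** For each fixed belief
`π ∈ [0,1]` and each availability/feasible action, the value function and
action-value functions are convex in the subsidy `w` on `ℝ`; here `V w` is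
the unique bounded fixed point of `T_w`. -/
theorem stmt6 (p00 p10 ρ0 ρ1 β θ11 θ01 θ00 : ℝ)
    (hp00 : p00 ∈ Icc (0:ℝ) 1) (hp10 : p10 ∈ Icc (0:ℝ) 1)
    (hρ0 : 0 < ρ0) (hρ01 : ρ0 < ρ1) (hρ1 : ρ1 < 1)
    (hβ : β ∈ Ioo (0:ℝ) 1)
    (hθ11 : θ11 ∈ Icc (0:ℝ) 1) (hθ01 : θ01 ∈ Icc (0:ℝ) 1) (hθ00 : θ00 ∈ Icc (0:ℝ) 1)
    (V : ℝ → ℝ → Bool → ℝ)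
    (hVb : ∀ w : ℝ, BddOnIcc (V w))
    (hVfix : ∀ w : ℝ, FixedOnIcc (TwOp p00 p10 ρ0 ρ1 β w θ11 θ01 θ00) (V w)) :
    ∀ π ∈ Icc (0:ℝ) 1,
      (∀ y : Bool, ConvexOn ℝ univ (fun w : ℝ => V w π y))
      ∧ ConvexOn ℝ univ (fun w : ℝ => Lact1 p00 p10 ρ0 ρ1 β θ11 (V w) π)
      ∧ ConvexOn ℝ univ (fun w : ℝ => Lact0a p00 p10 β w θ01 (V w) π)
      ∧ ConvexOn ℝ univ (fun w : ℝ => Lact0u p00 p10 β w θ00 (V w) π) := by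
  have hcombo := combo p00 p10 ρ0 ρ1 β θ11 θ01 θ00 hp00 hp10 hρ0 hρ01 hρ1 hβ
    hθ11 hθ01 hθ00 V hVb hVfix
  intro π hπ
  refine ⟨?_, ?_, ?_, ?_⟩
  · intro y
    refine ⟨convex_univ, ?_⟩
    intro x _ z _ l m hl hm hs
    simp only [smul_eq_mul]
    exact hcombo x z l m hl hm hs π hπ y
  · refine ⟨convex_univ, ?_⟩
    intro x _ z _ l m hl hm hs
    simp only [smul_eq_mul]
    have h1 := hcombo x z l m hl hm hs _ (Gam1_mem hp00 hp10 hρ0 hρ01 hρ1 hπ) true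
    have h2 := hcombo x z l m hl hm hs _ (Gam1_mem hp00 hp10 hρ0 hρ01 hρ1 hπ) false
    have h3 := hcombo x z l m hl hm hs _ (Gam0_mem hp00 hp10 hρ0 hρ01 hρ1 hπ) true
    have h4 := hcombo x z l m hl hm hs _ (Gam0_mem hp00 hp10 hρ0 hρ01 hρ1 hπ) false
    calc Lact1 p00 p10 ρ0 ρ1 β θ11 (V (l * x + m * z)) π
        ≤ Lact1 p00 p10 ρ0 ρ1 β θ11 (fun π' y => l * V x π' y + m * V z π' y) π :=
          Lact1_mono hβ.1.le hθ11 (rhoB_mem hρ0 hρ01 hρ1 hπ) h1 h2 h3 h4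
      _ = l * Lact1 p00 p10 ρ0 ρ1 β θ11 (V x) π
          + m * Lact1 p00 p10 ρ0 ρ1 β θ11 (V z) π := Lact1_linear (V x) (V z) hs
  · refine ⟨convex_univ, ?_⟩
    intro x _ z _ l m hl hm hs
    simp only [smul_eq_mul]
    have h1 := hcombo x z l m hl hm hs _ (gam_mem hp00 hp10 hπ) true
    have h2 := hcombo x z l m hl hm hs _ (gam_mem hp00 hp10 hπ) false
    calc Lact0a p00 p10 β (l * x + m * z) θ01 (V (l * x + m * z)) π
        ≤ Lact0a p00 p10 β (l * x + m * z) θ01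
            (fun π' y => l * V x π' y + m * V z π' y) π :=
          Lact0a_mono hβ.1.le hθ01 h1 h2
      _ = l * Lact0a p00 p10 β x θ01 (V x) π + m * Lact0a p00 p10 β z θ01 (V z) π :=
          Lact0a_linear (V x) (V z) hs
  · refine ⟨convex_univ, ?_⟩
    intro x _ z _ l m hl hm hs
    simp only [smul_eq_mul]
    have h1 := hcombo x z l m hl hm hs _ (gam_mem hp00 hp10 hπ) true
    have h2 := hcombo x z l m hl hm hs _ (gam_mem hp00 hp10 hπ) false
    calc Lact0u p00 p10 β (l * x + m * z) θ00 (V (l * x + m * z)) π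
        ≤ Lact0u p00 p10 β (l * x + m * z) θ00
            (fun π' y => l * V x π' y + m * V z π' y) π :=
          Lact0u_mono hβ.1.le hθ00 h1 h2
      _ = l * Lact0u p00 p10 β x θ00 (V x) π + m * Lact0u p00 p10 β z θ00 (V z) π :=
          Lact0u_linear (V x) (V z) hs
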